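/- Let Ω₁,…,Ω_N (N ≥ 2) be nonempty bounded open subsets of ℝ^d (d ≥ 2) whose closures are pairwise disjoint, and let δ be the minimal distance between boundary points of distinct obstacles. Suppose i ≠ j, q₁ ∈ ∂Ω_i, q₂ ∈ ∂Ω_j and ‖q₁ − q₂‖ = δ. Then the open segment joining q₁ and q₂ lies entirely in the exterior region: for every s ∈ (0,1) the point (1 − s)·q₁ + s·q₂ does not belong to the closure of Ω = Ω₁ ∪ … ∪ Ω_N. -/
import Mathlib

/-- A preconnected set meeting a closed set `t` and its complement meets `frontier t`. -/
lemma aux_frontier {E : Type*} [TopologicalSpace E] {s t : Set E}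
    (hs : IsPreconnected s) (ht : IsClosed t)
    (h1 : (s ∩ t).Nonempty) (h2 : (s \ t).Nonempty) :
    (s ∩ frontier t).Nonempty := by
  by_contra h
  rw [Set.not_nonempty_iff_eq_empty] at h
  have hcov : s ⊆ interior t ∪ tᶜ := by
    intro x hx
    by_cases hxt : x ∈ t
    · left
      have : x ∉ frontier t := fun hf => by
        have : x ∈ s ∩ frontier t := ⟨hx, hf⟩
        simp [h] at this
      rw [frontier, ht.closure_eq] at this
      simpa [hxt] using this
    · exact Or.inr hxt
  obtain ⟨p, hps, hpt⟩ := h1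
  have hpint : p ∈ interior t := by
    rcases hcov hps with h' | h'
    · exact h'
    · exact absurd hpt h'
  obtain ⟨q, hqs, hqt⟩ := h2
  obtain ⟨z, hz, hzu, hzv⟩ := hs (interior t) tᶜ isOpen_interior ht.isOpen_compl hcov
    ⟨p, hps, hpint⟩ ⟨q, hqs, hqt⟩
  exact hzv (interior_subset hzu)

/-- A minimizing segment between two distinct obstacles lies (except for its
endpoints) entirely outside the closure of the union of the obstacles. -/
theorem stmt2 (d N : ℕ) (hd : 2 ≤ d) (hN : 2 ≤ N)
    (Ω : Fin N → Set (EuclideanSpace ℝ (Fin d)))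
    (hne : ∀ i, (Ω i).Nonempty)
    (hbdd : ∀ i, Bornology.IsBounded (Ω i))
    (hopen : ∀ i, IsOpen (Ω i))
    (hdisj : ∀ i j, i ≠ j → Disjoint (closure (Ω i)) (closure (Ω j)))
    (δ : ℝ)
    (hδmin : ∀ i j, i ≠ j → ∀ x ∈ frontier (Ω i), ∀ y ∈ frontier (Ω j), δ ≤ ‖x - y‖)
    (i j : Fin N) (hij : i ≠ j)
    (q₁ q₂ : EuclideanSpace ℝ (Fin d))
    (hq₁ : q₁ ∈ frontier (Ω i)) (hq₂ : q₂ ∈ frontier (Ω j))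
    (hq : ‖q₁ - q₂‖ = δ) :
    ∀ s ∈ Set.Ioo (0 : ℝ) 1, (1 - s) • q₁ + s • q₂ ∉ closure (⋃ k, Ω k) := by
  intro s hs hp
  obtain ⟨hs0, hs1⟩ := hs
  set p : EuclideanSpace ℝ (Fin d) := (1 - s) • q₁ + s • q₂ with hpdef
  -- δ > 0
  have hq1c : q₁ ∈ closure (Ω i) := hq₁.1
  have hq2c : q₂ ∈ closure (Ω j) := hq₂.1
  have hne12 : q₁ ≠ q₂ := by
    intro h
    exact (hdisj i j hij).ne_of_mem hq1c hq2c h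
  have hδpos : 0 < δ := by
    rw [← hq]
    simpa [sub_eq_zero] using hne12
  -- p belongs to some closure (Ω k)
  have hclos : closure (⋃ k, Ω k) ⊆ ⋃ k, closure (Ω k) :=
    closure_minimal (Set.iUnion_mono fun k => subset_closure)
      (isClosed_iUnion_of_finite fun k => isClosed_closure)
  obtain ⟨k, hk⟩ := Set.mem_iUnion.mp (hclos hp)
  -- distances from p to endpoints
  have hq1p : q₁ - p = s • (q₁ - q₂) := by
    rw [hpdef]; module
  have hpq2 : p - q₂ = (1 - s) • (q₁ - q₂) := by
    rw [hpdef]; module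
  have hdq1p : ‖q₁ - p‖ = s * δ := by
    rw [hq1p, norm_smul, hq, Real.norm_eq_abs, abs_of_pos hs0]
  have hdpq2 : ‖p - q₂‖ = (1 - s) * δ := by
    rw [hpq2, norm_smul, hq, Real.norm_eq_abs, abs_of_pos (by linarith)]
  by_cases hk_i : k = i
  · -- p ∈ closure (Ω i); use segment from q₂ to p
    subst hk_i
    have hq2not : q₂ ∉ closure (Ω k) := fun h =>
      (hdisj k j hij).ne_of_mem h hq2c rfl
    obtain ⟨y, hyseg, hyfr⟩ := aux_frontier (s := segment ℝ q₂ p) (t := closure (Ω k))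
      (convex_segment q₂ p).isPreconnected isClosed_closure
      ⟨p, right_mem_segment ℝ q₂ p, hk⟩ ⟨q₂, left_mem_segment ℝ q₂ p, hq2not⟩
    have hyfr' : y ∈ frontier (Ω k) := frontier_closure_subset hyfr
    have hdy : δ ≤ ‖y - q₂‖ := hδmin k j hij y hyfr' q₂ hq₂
    have hseg := dist_add_dist_of_mem_segment hyseg
    have hle : dist q₂ y ≤ dist q₂ p := by
      have h0 : 0 ≤ dist y p := dist_nonneg
      linarith
    rw [dist_comm q₂ y, dist_comm q₂ p] at hle
    rw [dist_eq_norm, dist_eq_norm] at hle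
    rw [hdpq2] at hle
    nlinarith [hdy, hle]
  · -- p ∈ closure (Ω k), k ≠ i; use segment from q₁ to p
    have hq1not : q₁ ∉ closure (Ω k) := fun h =>
      (hdisj i k (Ne.symm hk_i)).ne_of_mem hq1c h rfl
    obtain ⟨y, hyseg, hyfr⟩ := aux_frontier (s := segment ℝ q₁ p) (t := closure (Ω k))
      (convex_segment q₁ p).isPreconnected isClosed_closure
      ⟨p, right_mem_segment ℝ q₁ p, hk⟩ ⟨q₁, left_mem_segment ℝ q₁ p, hq1not⟩
    have hyfr' : y ∈ frontier (Ω k) := frontier_closure_subset hyfr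
    have hdy : δ ≤ ‖q₁ - y‖ := hδmin i k (Ne.symm hk_i) q₁ hq₁ y hyfr'
    have hseg := dist_add_dist_of_mem_segment hyseg
    have hle : dist q₁ y ≤ dist q₁ p := by
      have h0 : 0 ≤ dist y p := dist_nonneg
      linarith
    rw [dist_eq_norm, dist_eq_norm] at hle
    rw [hdq1p] at hle
    nlinarith [hdy, hle]
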